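/- Tree Recognition: let G be an input graph for the tree-recognition system. Then G has a normal form, and for every normal form H of G (G ⇒*_𝓡 H with no rule of 𝓡 applicable to H): H is isomorphic to the single-node graph whose node is rooted and labelled □ and which has no edges, if and only if G is a tree. -/

import Mathlib

/-! # Rooted graph transformation with relabelling -/

/-- A graph over a label alphabet `(LV, LE)`: finite vertex and edge sets, total
source/target functions, a partial node-labelling function `l`, a total
edge-labelling function `m`, and a partial rootedness function `p`
(`some true` = root node, `some false` = non-root, `none` = undefined). -/
structure RGraph (LV LE : Type) : Type 1 where
  V : Type
  E : Type
  finV : Finite V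
  finE : Finite E
  s : E → V
  t : E → V
  l : V → Option LV
  m : E → LE
  p : V → Option Bool

namespace RGraph

variable {LV LE : Type}

def IsTotallyLabelled (G : RGraph LV LE) : Prop := ∀ v, (G.l v).isSome
def IsTotallyRooted (G : RGraph LV LE) : Prop := ∀ v, (G.p v).isSome
/-- totally labelled, totally rooted graph -/
def IsTLRG (G : RGraph LV LE) : Prop := G.IsTotallyLabelled ∧ G.IsTotallyRooted

/-- The number of root nodes `|p⁻¹({1})|`. -/
noncomputable def rootCount (G : RGraph LV LE) : ℕ := Nat.card {v : G.V // G.p v = some true}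

/-- The degree of a node. -/
noncomputable def degree (G : RGraph LV LE) (v : G.V) : ℕ :=
  Nat.card {e : G.E // G.s e = v} + Nat.card {e : G.E // G.t e = v}

end RGraph

/-- Graph morphisms preserve sources, targets, edge labels, and node labels and
rootedness wherever these are defined. -/
structure Morphism {LV LE : Type} (G H : RGraph LV LE) : Type where
  fV : G.V → H.V
  fE : G.E → H.E
  src : ∀ e, fV (G.s e) = H.s (fE e)
  tgt : ∀ e, fV (G.t e) = H.t (fE e)
  edgeLabel : ∀ e, G.m e = H.m (fE e)
  nodeLabel : ∀ v x, G.l v = some x → H.l (fV v) = some x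
  rootedness : ∀ v b, G.p v = some b → H.p (fV v) = some b

namespace Morphism

variable {LV LE : Type} {G H K : RGraph LV LE}

def Injective (g : Morphism G H) : Prop := Function.Injective g.fV ∧ Function.Injective g.fE

/-- identity morphism -/
def ident (G : RGraph LV LE) : Morphism G G where
  fV := id
  fE := id
  src := fun _ => rfl
  tgt := fun _ => rfl
  edgeLabel := fun _ => rfl
  nodeLabel := fun _ _ h => h
  rootedness := fun _ _ h => h

/-- composition of morphisms -/
def comp (g : Morphism G H) (h : Morphism H K) : Morphism G K where
  fV := h.fV ∘ g.fV
  fE := h.fE ∘ g.fE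
  src := fun e => by simp [Function.comp, g.src e, h.src (g.fE e)]
  tgt := fun e => by simp [Function.comp, g.tgt e, h.tgt (g.fE e)]
  edgeLabel := fun e => by simp [Function.comp, ← h.edgeLabel (g.fE e), g.edgeLabel e]
  nodeLabel := fun v x hx => h.nodeLabel _ _ (g.nodeLabel v x hx)
  rootedness := fun v b hb => h.rootedness _ _ (g.rootedness v b hb)

end Morphism

/-- An isomorphism of graphs: a morphism with a two-sided inverse morphism. -/
structure Iso {LV LE : Type} (G H : RGraph LV LE) : Type where
  toMor : Morphism G H
  invMor : Morphism H G
  leftV : ∀ v, invMor.fV (toMor.fV v) = v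
  leftE : ∀ e, invMor.fE (toMor.fE e) = e
  rightV : ∀ v, toMor.fV (invMor.fV v) = v
  rightE : ∀ e, toMor.fE (invMor.fE e) = e

/-- A rule `⟨L ← K → R⟩`: graphs `L`, `K`, `R` together with inclusion
(injective) morphisms `K ↪ L` and `K ↪ R`.  (In the rooted relabelling setting
`L` and `R` are additionally required to be TLRGs; this requirement is stated
as a hypothesis where needed.) -/
structure Rule (LV LE : Type) : Type 1 where
  L : RGraph LV LE
  K : RGraph LV LE
  R : RGraph LV LE
  incL : Morphism K L
  incR : Morphism K R
  injL : incL.Injective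
  injR : incR.Injective

namespace Rule

variable {LV LE : Type} (r : Rule LV LE) (G : RGraph LV LE)

/-- The inverse rule `r⁻¹ = ⟨R ← K → L⟩`. -/
def inv (r : Rule LV LE) : Rule LV LE where
  L := r.R
  K := r.K
  R := r.L
  incL := r.incR
  incR := r.incL
  injL := r.injR
  injR := r.injL

/-- The dangling condition: no edge of `G ∖ g(L)` is incident to a node of `g(L ∖ K)`. -/
def Dangling (g : Morphism r.L G) : Prop :=
  ∀ e : G.E, (∀ e' : r.L.E, g.fE e' ≠ e) →
    ∀ v : r.L.V, (∀ k : r.K.V, r.incL.fV k ≠ v) →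
      G.s e ≠ g.fV v ∧ G.t e ≠ g.fV v

/-- The match `g` is applicable: it is injective and satisfies the dangling condition. -/
def Applicable (g : Morphism r.L G) : Prop := g.Injective ∧ r.Dangling G g

/-- the nodes `g(L ∖ K)` deleted by applying `r` via `g` -/
def DelV (g : Morphism r.L G) : Set G.V :=
  {x | ∃ v : r.L.V, (∀ k : r.K.V, r.incL.fV k ≠ v) ∧ g.fV v = x}

/-- the edges `g(L ∖ K)` deleted by applying `r` via `g` -/
def DelE (g : Morphism r.L G) : Set G.E :=
  {x | ∃ e : r.L.E, (∀ k : r.K.E, r.incL.fE k ≠ e) ∧ g.fE e = x}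

theorem kept_incL {g : Morphism r.L G} (hinj : g.Injective) (k : r.K.V) :
    g.fV (r.incL.fV k) ∉ r.DelV G g := by
  rintro ⟨v, hv, heq⟩
  exact hv k (hinj.1 heq).symm

theorem kept_src {g : Morphism r.L G} (h : r.Applicable G g) {e : G.E}
    (he : e ∉ r.DelE G g) : G.s e ∉ r.DelV G g := by
  rintro ⟨v, hv, heq⟩
  by_cases hc : ∃ e', g.fE e' = e
  · obtain ⟨e', rfl⟩ := hc
    by_cases hk : ∃ k, r.incL.fE k = e'
    · obtain ⟨k, rfl⟩ := hk
      have h1 : g.fV (r.L.s (r.incL.fE k)) = G.s (g.fE (r.incL.fE k)) := g.src _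
      have h2 : r.incL.fV (r.K.s k) = r.L.s (r.incL.fE k) := r.incL.src k
      have h3 : g.fV v = g.fV (r.incL.fV (r.K.s k)) := by rw [heq, h2, h1]
      exact hv _ (h.1.1 h3).symm
    · exact he ⟨e', fun k hk' => hk ⟨k, hk'⟩, rfl⟩
  · exact (h.2 e (fun e' he' => hc ⟨e', he'⟩) v hv).1 heq.symm

theorem kept_tgt {g : Morphism r.L G} (h : r.Applicable G g) {e : G.E}
    (he : e ∉ r.DelE G g) : G.t e ∉ r.DelV G g := by
  rintro ⟨v, hv, heq⟩
  by_cases hc : ∃ e', g.fE e' = e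
  · obtain ⟨e', rfl⟩ := hc
    by_cases hk : ∃ k, r.incL.fE k = e'
    · obtain ⟨k, rfl⟩ := hk
      have h1 : g.fV (r.L.t (r.incL.fE k)) = G.t (g.fE (r.incL.fE k)) := g.tgt _
      have h2 : r.incL.fV (r.K.t k) = r.L.t (r.incL.fE k) := r.incL.tgt k
      have h3 : g.fV v = g.fV (r.incL.fV (r.K.t k)) := by rw [heq, h2, h1]
      exact hv _ (h.1.1 h3).symm
    · exact he ⟨e', fun k hk' => hk ⟨k, hk'⟩, rfl⟩
  · exact (h.2 e (fun e' he' => hc ⟨e', he'⟩) v hv).2 heq.symm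

attribute [local instance] Classical.propDecidable

/-- The result graph of applying `r` to `G` via an applicable match `g`:
delete `g(L ∖ K)` (undefining labels/rootedness of images of interface nodes
where they are undefined in `K`), then add `R ∖ K` disjointly, relabelling
(and re-rooting) the images of interface nodes according to `R`. -/
noncomputable def result (g : Morphism r.L G) (h : r.Applicable G g) : RGraph LV LE where
  V := {x : G.V // x ∉ r.DelV G g} ⊕ {v : r.R.V // ∀ k, r.incR.fV k ≠ v}
  E := {x : G.E // x ∉ r.DelE G g} ⊕ {e : r.R.E // ∀ k, r.incR.fE k ≠ e}
  finV := by
    haveI := G.finV; haveI := r.R.finV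
    infer_instance
  finE := by
    haveI := G.finE; haveI := r.R.finE
    infer_instance
  s := fun e =>
    match e with
    | Sum.inl x => Sum.inl ⟨G.s x.1, r.kept_src G h x.2⟩
    | Sum.inr x =>
        if hk : ∃ k, r.incR.fV k = r.R.s x.1 then
          Sum.inl ⟨g.fV (r.incL.fV hk.choose), r.kept_incL G h.1 _⟩
        else Sum.inr ⟨r.R.s x.1, fun k hk' => hk ⟨k, hk'⟩⟩
  t := fun e =>
    match e with
    | Sum.inl x => Sum.inl ⟨G.t x.1, r.kept_tgt G h x.2⟩
    | Sum.inr x =>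
        if hk : ∃ k, r.incR.fV k = r.R.t x.1 then
          Sum.inl ⟨g.fV (r.incL.fV hk.choose), r.kept_incL G h.1 _⟩
        else Sum.inr ⟨r.R.t x.1, fun k hk' => hk ⟨k, hk'⟩⟩
  l := fun v =>
    match v with
    | Sum.inl x =>
        if hk : ∃ k : r.K.V, r.K.l k = none ∧ g.fV (r.incL.fV k) = x.1 then
          r.R.l (r.incR.fV hk.choose)
        else G.l x.1
    | Sum.inr v => r.R.l v.1
  m := fun e =>
    match e with
    | Sum.inl x => G.m x.1
    | Sum.inr x => r.R.m x.1
  p := fun v =>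
    match v with
    | Sum.inl x =>
        if hk : ∃ k : r.K.V, r.K.p k = none ∧ g.fV (r.incL.fV k) = x.1 then
          r.R.p (r.incR.fV hk.choose)
        else G.p x.1
    | Sum.inr v => r.R.p v.1

/-- Direct derivation `G ⇒_r M`: there is an applicable match `g` such that `M`
is isomorphic to the result of applying `r` to `G` via `g`. -/
def Deriv (r : Rule LV LE) (G M : RGraph LV LE) : Prop :=
  ∃ (g : Morphism r.L G) (h : r.Applicable G g), Nonempty (Iso (r.result G g h) M)

end Rule

/-- `G ⇒_𝓡 H` for a set of rules. -/
def GTStep {LV LE : Type} (Rs : Set (Rule LV LE)) (G H : RGraph LV LE) : Prop :=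
  ∃ r ∈ Rs, r.Deriv G H

/-- `G ⇒*_𝓡 H`: the reflexive-transitive closure of `⇒_𝓡`, up to isomorphism. -/
def GTDerivStar {LV LE : Type} (Rs : Set (Rule LV LE)) (G H : RGraph LV LE) : Prop :=
  Relation.ReflTransGen (GTStep Rs) G H ∨ Nonempty (Iso G H)
/-! ## The tree-recognition system -/

/-- node labels: `□` (square) and `△` (triangle) -/
inductive NodeLab : Type where
  | square : NodeLab
  | tri : NodeLab
deriving DecidableEq

/-- `L` of rule `r0`: `v1 --□--> v2`, both `□`-labelled, `v1` unrooted, `v2` rooted. -/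
abbrev L0 : RGraph NodeLab Unit where
  V := Fin 2
  E := Unit
  finV := inferInstance
  finE := inferInstance
  s := fun _ => 0
  t := fun _ => 1
  l := fun _ => some .square
  m := fun _ => ()
  p := ![some false, some true]

/-- `K` of rules `r0` and `r1`: the single node `v1`, unlabelled, rootedness undefined. -/
abbrev K0 : RGraph NodeLab Unit where
  V := Unit
  E := PEmpty
  finV := inferInstance
  finE := inferInstance
  s := PEmpty.elim
  t := PEmpty.elim
  l := fun _ => none
  m := PEmpty.elim
  p := fun _ => none

/-- `R` of rules `r0` and `r1`: the single node `v1`, labelled `□`, rooted. -/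
abbrev R0 : RGraph NodeLab Unit where
  V := Unit
  E := PEmpty
  finV := inferInstance
  finE := inferInstance
  s := PEmpty.elim
  t := PEmpty.elim
  l := fun _ => some .square
  m := PEmpty.elim
  p := fun _ => some true

def incL0 : Morphism K0 L0 where
  fV := fun _ => 0
  fE := PEmpty.elim
  src := fun e => e.elim
  tgt := fun e => e.elim
  edgeLabel := fun e => e.elim
  nodeLabel := fun _ _ h => nomatch h
  rootedness := fun _ _ h => nomatch h

def incR0 : Morphism K0 R0 where
  fV := id
  fE := PEmpty.elim
  src := fun e => e.elim
  tgt := fun e => e.elim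
  edgeLabel := fun e => e.elim
  nodeLabel := fun _ _ h => nomatch h
  rootedness := fun _ _ h => nomatch h

/-- rule `r0`: prune a rooted `□`-leaf with unrooted `□`-parent, root moves to the parent -/
def r0 : Rule NodeLab Unit where
  L := L0
  K := K0
  R := R0
  incL := incL0
  incR := incR0
  injL := ⟨Function.injective_of_subsingleton _, Function.injective_of_subsingleton _⟩
  injR := ⟨Function.injective_of_subsingleton _, Function.injective_of_subsingleton _⟩

/-- `L` of rule `r1`: like `L0` but `v1` is labelled `△`. -/
abbrev L1 : RGraph NodeLab Unit where
  V := Fin 2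
  E := Unit
  finV := inferInstance
  finE := inferInstance
  s := fun _ => 0
  t := fun _ => 1
  l := ![some .tri, some .square]
  m := fun _ => ()
  p := ![some false, some true]

def incL1 : Morphism K0 L1 where
  fV := fun _ => 0
  fE := PEmpty.elim
  src := fun e => e.elim
  tgt := fun e => e.elim
  edgeLabel := fun e => e.elim
  nodeLabel := fun _ _ h => nomatch h
  rootedness := fun _ _ h => nomatch h

/-- rule `r1`: prune a rooted `□`-leaf with unrooted `△`-parent, root moves to the
parent which becomes `□`-labelled -/
def r1 : Rule NodeLab Unit where
  L := L1
  K := K0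
  R := R0
  incL := incL1
  incR := incR0
  injL := ⟨Function.injective_of_subsingleton _, Function.injective_of_subsingleton _⟩
  injR := ⟨Function.injective_of_subsingleton _, Function.injective_of_subsingleton _⟩

/-- `L` of rule `r2`: `v1 --□--> v2`, both `□`-labelled, `v1` rooted, `v2` unrooted. -/
abbrev L2 : RGraph NodeLab Unit where
  V := Fin 2
  E := Unit
  finV := inferInstance
  finE := inferInstance
  s := fun _ => 0
  t := fun _ => 1
  l := fun _ => some .square
  m := fun _ => ()
  p := ![some true, some false]

/-- `K` of rule `r2`: nodes `v1, v2`, unlabelled, rootedness undefined, no edges. -/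
abbrev K2 : RGraph NodeLab Unit where
  V := Fin 2
  E := PEmpty
  finV := inferInstance
  finE := inferInstance
  s := PEmpty.elim
  t := PEmpty.elim
  l := fun _ => none
  m := PEmpty.elim
  p := fun _ => none

/-- `R` of rule `r2`: `v1 --□--> v2`, `v1` labelled `△` and unrooted, `v2` labelled `□`
and rooted. -/
abbrev R2 : RGraph NodeLab Unit where
  V := Fin 2
  E := Unit
  finV := inferInstance
  finE := inferInstance
  s := fun _ => 0
  t := fun _ => 1
  l := ![some .tri, some .square]
  m := fun _ => ()
  p := ![some false, some true]

def incL2 : Morphism K2 L2 where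
  fV := id
  fE := PEmpty.elim
  src := fun e => e.elim
  tgt := fun e => e.elim
  edgeLabel := fun e => e.elim
  nodeLabel := fun _ _ h => nomatch h
  rootedness := fun _ _ h => nomatch h

def incR2 : Morphism K2 R2 where
  fV := id
  fE := PEmpty.elim
  src := fun e => e.elim
  tgt := fun e => e.elim
  edgeLabel := fun e => e.elim
  nodeLabel := fun _ _ h => nomatch h
  rootedness := fun _ _ h => nomatch h

/-- rule `r2`: push the root one step down an edge, marking the old position `△` -/
def r2 : Rule NodeLab Unit where
  L := L2
  K := K2
  R := R2
  incL := incL2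
  incR := incR2
  injL := ⟨Function.injective_id, Function.injective_of_subsingleton _⟩
  injR := ⟨Function.injective_id, Function.injective_of_subsingleton _⟩

/-- the rule set of the tree-recognition system -/
def TreeRules : Set (Rule NodeLab Unit) := {r0, r1, r2}

/-! ## Trees -/

/-- `IsUndirWalk G v l w`: `l` is an undirected walk from `v` to `w` in `G`;
each step is an edge together with a boolean telling in which direction it is
traversed. -/
def IsUndirWalk {LV LE : Type} (G : RGraph LV LE) : G.V → List (G.E × Bool) → G.V → Prop
  | v, [], w => v = w
  | v, (e, true) :: rest, w => G.s e = v ∧ IsUndirWalk G (G.t e) rest w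
  | v, (e, false) :: rest, w => G.t e = v ∧ IsUndirWalk G (G.s e) rest w

/-- connectedness via undirected walks -/
def IsConnectedGraph {LV LE : Type} (G : RGraph LV LE) : Prop :=
  ∀ v w : G.V, ∃ l, IsUndirWalk G v l w

/-- an undirected cycle: a non-empty closed undirected walk without repeated edges -/
def HasUndirCycle {LV LE : Type} (G : RGraph LV LE) : Prop :=
  ∃ (v : G.V) (l : List (G.E × Bool)), l ≠ [] ∧ IsUndirWalk G v l v ∧ (l.map Prod.fst).Nodup

/-- a tree: non-empty, connected, no undirected cycles, and every node has at
most one incoming edge -/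
def IsTree {LV LE : Type} (G : RGraph LV LE) : Prop :=
  Nonempty G.V ∧ IsConnectedGraph G ∧ ¬ HasUndirCycle G ∧
    ∀ v : G.V, Nat.card {e : G.E // G.t e = v} ≤ 1

/-- an input graph: a TLRG with exactly one root node, all nodes labelled `□`
(all edges are `□`-labelled since `Unit` is the edge alphabet) -/
def IsInputGraph (G : RGraph NodeLab Unit) : Prop :=
  G.IsTLRG ∧ (∀ v, G.l v = some .square) ∧ G.rootCount = 1

/-- no rule of `Rs` is applicable to `H` -/
def InNormalForm {LV LE : Type} (Rs : Set (Rule LV LE)) (H : RGraph LV LE) : Prop :=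
  ¬ ∃ r ∈ Rs, ∃ g : Morphism r.L H, r.Applicable H g

/-- the single-node graph: one rooted node labelled `□`, no edges -/
abbrev singleRootGraph : RGraph NodeLab Unit where
  V := Unit
  E := PEmpty
  finV := inferInstance
  finE := inferInstance
  s := PEmpty.elim
  t := PEmpty.elim
  l := fun _ => some .square
  m := PEmpty.elim
  p := fun _ => some true


/-! ## Auxiliary development -/

instance (priority := 100) {LV LE : Type} (G : RGraph LV LE) : Finite G.V := G.finV
instance (priority := 100) {LV LE : Type} (G : RGraph LV LE) : Finite G.E := G.finE

section Walks

variable {LV LE : Type} {G : RGraph LV LE}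

/-- directed walks -/
def IsDirWalk (G : RGraph LV LE) : G.V → List G.E → G.V → Prop
  | v, [], w => v = w
  | v, e :: rest, w => G.s e = v ∧ IsDirWalk G (G.t e) rest w

theorem IsDirWalk.append : ∀ {l₁ l₂ : List G.E} {v w x},
    IsDirWalk G v l₁ w → IsDirWalk G w l₂ x → IsDirWalk G v (l₁ ++ l₂) x
  | [], _, v, w, x, h1, h2 => by cases h1; exact h2
  | e :: rest, _, v, w, x, h1, h2 => ⟨h1.1, IsDirWalk.append h1.2 h2⟩

theorem IsUndirWalk.append : ∀ {l₁ l₂ : List (G.E × Bool)} {v w x},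
    IsUndirWalk G v l₁ w → IsUndirWalk G w l₂ x → IsUndirWalk G v (l₁ ++ l₂) x
  | [], _, v, w, x, h1, h2 => by cases h1; exact h2
  | (e, true) :: rest, _, v, w, x, h1, h2 => ⟨h1.1, IsUndirWalk.append h1.2 h2⟩
  | (e, false) :: rest, _, v, w, x, h1, h2 => ⟨h1.1, IsUndirWalk.append h1.2 h2⟩

theorem IsUndirWalk.split : ∀ {l₁ l₂ : List (G.E × Bool)} {v x},
    IsUndirWalk G v (l₁ ++ l₂) x → ∃ w, IsUndirWalk G v l₁ w ∧ IsUndirWalk G w l₂ x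
  | [], l₂, v, x, h => ⟨v, rfl, h⟩
  | (e, true) :: rest, l₂, v, x, h => by
      obtain ⟨w, hw1, hw2⟩ := IsUndirWalk.split (l₁ := rest) h.2
      exact ⟨w, ⟨h.1, hw1⟩, hw2⟩
  | (e, false) :: rest, l₂, v, x, h => by
      obtain ⟨w, hw1, hw2⟩ := IsUndirWalk.split (l₁ := rest) h.2
      exact ⟨w, ⟨h.1, hw1⟩, hw2⟩

theorem IsUndirWalk.reverse : ∀ {l : List (G.E × Bool)} {v w},
    IsUndirWalk G v l w → IsUndirWalk G w (l.reverse.map fun q => (q.1, !q.2)) v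
  | [], v, w, h => by cases h; exact rfl
  | (e, true) :: rest, v, w, h => by
      have := IsUndirWalk.reverse h.2
      simp only [List.reverse_cons, List.map_append]
      exact this.append ⟨rfl, h.1⟩
  | (e, false) :: rest, v, w, h => by
      have := IsUndirWalk.reverse h.2
      simp only [List.reverse_cons, List.map_append]
      exact this.append ⟨rfl, h.1⟩

theorem IsDirWalk.toUndir : ∀ {l : List G.E} {v w},
    IsDirWalk G v l w → IsUndirWalk G v (l.map fun e => (e, true)) w
  | [], v, w, h => h
  | e :: rest, v, w, h => ⟨h.1, h.2.toUndir⟩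

theorem IsDirWalk.split : ∀ {l : List G.E} {v w} {e : G.E},
    IsDirWalk G v l w → e ∈ l →
    ∃ l₁ l₂, l = l₁ ++ e :: l₂ ∧ IsDirWalk G v l₁ (G.s e) ∧ IsDirWalk G (G.t e) l₂ w
  | [], v, w, e, h, hm => absurd hm List.not_mem_nil
  | e' :: rest, v, w, e, h, hm => by
      rcases List.mem_cons.mp hm with rfl | hm
      · exact ⟨[], rest, rfl, h.1.symm, h.2⟩
      · obtain ⟨l₁, l₂, rfl, h1, h2⟩ := IsDirWalk.split h.2 hm
        exact ⟨e' :: l₁, l₂, rfl, ⟨h.1, h1⟩, h2⟩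

theorem no_closed_dirwalk_aux (hG : ¬ HasUndirCycle G) :
    ∀ (n : ℕ) (l : List G.E), l.length ≤ n → ∀ v, IsDirWalk G v l v → l = [] := by
  intro n
  induction n with
  | zero => exact fun l hl v _ => List.length_eq_zero_iff.mp (Nat.le_zero.mp hl)
  | succ n ih =>
    intro l hl v hw
    by_contra hne
    letI := Classical.decEq G.E
    by_cases hnd : l.Nodup
    · exact hG ⟨v, l.map fun e => (e, true), by simpa using hne, hw.toUndir, by simpa [Function.comp_def] using hnd⟩
    · rw [List.nodup_iff_count_le_one] at hnd
      push_neg at hnd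
      obtain ⟨e, he⟩ := hnd
      have hmem : e ∈ l := by
        rw [← List.count_pos_iff]; omega
      obtain ⟨l₁, l₂, rfl, h1, h2⟩ := hw.split hmem
      have hcount : e ∈ l₁ ∨ e ∈ l₂ := by
        rw [List.count_append, List.count_cons_self] at he
        rcases Nat.lt_or_ge 0 (l₁.count e) with h | h
        · exact Or.inl (List.count_pos_iff.mp h)
        · exact Or.inr (List.count_pos_iff.mp (by omega))
      have hlen := hl
      simp only [List.length_append, List.length_cons] at hlen
      rcases hcount with hm | hm
      · obtain ⟨a, b, rfl, ha, hb⟩ := h1.split hm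
        have : (e :: b) = [] := by
          refine ih (e :: b) ?_ (G.s e) ⟨rfl, hb⟩
          simp only [List.length_append, List.length_cons] at hlen ⊢
          omega
        simp at this
      · obtain ⟨a, b, rfl, ha, hb⟩ := h2.split hm
        have : (e :: a) = [] := by
          refine ih (e :: a) ?_ (G.s e) ⟨rfl, ha⟩
          simp only [List.length_append, List.length_cons] at hlen ⊢
          omega
        simp at this

theorem no_closed_dirwalk (hG : ¬ HasUndirCycle G) {l : List G.E} {v : G.V}
    (h : IsDirWalk G v l v) : l = [] :=
  no_closed_dirwalk_aux hG l.length l le_rfl v h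
end Walks


section IsoLemmas

variable {LV LE : Type} {G H K : RGraph LV LE}

theorem Morphism.undirWalk_map (f : Morphism G H) : ∀ {l : List (G.E × Bool)} {v w},
    IsUndirWalk G v l w → IsUndirWalk H (f.fV v) (l.map fun q => (f.fE q.1, q.2)) (f.fV w)
  | [], _, _, h => congrArg f.fV h
  | (_, true) :: _, _, _, h =>
      ⟨by rw [← f.src, h.1], by rw [← f.tgt]; exact f.undirWalk_map h.2⟩
  | (_, false) :: _, _, _, h =>
      ⟨by rw [← f.tgt, h.1], by rw [← f.src]; exact f.undirWalk_map h.2⟩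

theorem Morphism.dirWalk_map (f : Morphism G H) : ∀ {l : List G.E} {v w},
    IsDirWalk G v l w → IsDirWalk H (f.fV v) (l.map f.fE) (f.fV w)
  | [], _, _, h => congrArg f.fV h
  | _ :: _, _, _, h => ⟨by rw [← f.src, h.1], by rw [← f.tgt]; exact f.dirWalk_map h.2⟩

namespace Iso

def refl (G : RGraph LV LE) : Iso G G :=
  ⟨Morphism.ident G, Morphism.ident G, fun _ => rfl, fun _ => rfl, fun _ => rfl, fun _ => rfl⟩

def symm (φ : Iso G H) : Iso H G := ⟨φ.invMor, φ.toMor, φ.rightV, φ.rightE, φ.leftV, φ.leftE⟩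

def trans (φ : Iso G H) (ψ : Iso H K) : Iso G K where
  toMor := φ.toMor.comp ψ.toMor
  invMor := ψ.invMor.comp φ.invMor
  leftV v := by simp only [Morphism.comp, Function.comp_apply]; rw [ψ.leftV, φ.leftV]
  leftE e := by simp only [Morphism.comp, Function.comp_apply]; rw [ψ.leftE, φ.leftE]
  rightV v := by simp only [Morphism.comp, Function.comp_apply]; rw [φ.rightV, ψ.rightV]
  rightE e := by simp only [Morphism.comp, Function.comp_apply]; rw [φ.rightE, ψ.rightE]

def eV (φ : Iso G H) : G.V ≃ H.V := ⟨φ.toMor.fV, φ.invMor.fV, φ.leftV, φ.rightV⟩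
def eE (φ : Iso G H) : G.E ≃ H.E := ⟨φ.toMor.fE, φ.invMor.fE, φ.leftE, φ.rightE⟩

theorem l_eq (φ : Iso G H) (v : G.V) : H.l (φ.toMor.fV v) = G.l v := by
  cases hl : G.l v with
  | some x => exact φ.toMor.nodeLabel v x hl
  | none =>
    cases hl2 : H.l (φ.toMor.fV v) with
    | none => rfl
    | some x =>
      have := φ.invMor.nodeLabel _ x hl2
      rw [φ.leftV, hl] at this
      exact this.symm

theorem p_eq (φ : Iso G H) (v : G.V) : H.p (φ.toMor.fV v) = G.p v := by
  cases hl : G.p v with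
  | some x => exact φ.toMor.rootedness v x hl
  | none =>
    cases hl2 : H.p (φ.toMor.fV v) with
    | none => rfl
    | some x =>
      have := φ.invMor.rootedness _ x hl2
      rw [φ.leftV, hl] at this
      exact this.symm

/-- build an iso from equivs that strictly preserve all structure -/
def ofStrict (eV : G.V ≃ H.V) (eE : G.E ≃ H.E)
    (hs : ∀ e, H.s (eE e) = eV (G.s e)) (ht : ∀ e, H.t (eE e) = eV (G.t e))
    (hm : ∀ e, H.m (eE e) = G.m e) (hl : ∀ v, H.l (eV v) = G.l v)
    (hp : ∀ v, H.p (eV v) = G.p v) : Iso G H where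
  toMor :=
    { fV := eV, fE := eE
      src := fun e => (hs e).symm
      tgt := fun e => (ht e).symm
      edgeLabel := fun e => (hm e).symm
      nodeLabel := fun v _ h => by rw [hl]; exact h
      rootedness := fun v _ h => by rw [hp]; exact h }
  invMor :=
    { fV := eV.symm, fE := eE.symm
      src := fun e => by
        apply eV.injective
        rw [Equiv.apply_symm_apply, ← hs, Equiv.apply_symm_apply]
      tgt := fun e => by
        apply eV.injective
        rw [Equiv.apply_symm_apply, ← ht, Equiv.apply_symm_apply]
      edgeLabel := fun e => by rw [← hm, Equiv.apply_symm_apply]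
      nodeLabel := fun v _ h => by rw [← hl, Equiv.apply_symm_apply]; exact h
      rootedness := fun v _ h => by rw [← hp, Equiv.apply_symm_apply]; exact h }
  leftV := eV.symm_apply_apply
  leftE := eE.symm_apply_apply
  rightV := eV.apply_symm_apply
  rightE := eE.apply_symm_apply

theorem isTree_of (φ : Iso G H) (h : IsTree G) : IsTree H := by
  obtain ⟨⟨v0⟩, hconn, hcyc, hdeg⟩ := h
  refine ⟨⟨φ.toMor.fV v0⟩, ?_, ?_, ?_⟩
  · intro v w
    obtain ⟨l, hl⟩ := hconn (φ.invMor.fV v) (φ.invMor.fV w)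
    have := φ.toMor.undirWalk_map hl
    rw [φ.rightV, φ.rightV] at this
    exact ⟨_, this⟩
  · rintro ⟨v, l, hne, hw, hnd⟩
    refine hcyc ⟨φ.invMor.fV v, _, ?_, φ.invMor.undirWalk_map hw, ?_⟩
    · simpa using hne
    · have hinj : Function.Injective φ.invMor.fE := Function.LeftInverse.injective φ.rightE
      rw [List.map_map]
      have : (Prod.fst ∘ fun q : H.E × Bool => (φ.invMor.fE q.1, q.2)) =
          φ.invMor.fE ∘ Prod.fst := rfl
      rw [this, ← List.map_map]
      exact hnd.map hinj
  · intro v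
    have hle := hdeg (φ.invMor.fV v)
    have hequiv : {e : H.E // H.t e = v} ≃ {e : G.E // G.t e = φ.invMor.fV v} := by
      refine Equiv.subtypeEquiv φ.eE.symm fun e => ?_
      show H.t e = v ↔ G.t (φ.invMor.fE e) = φ.invMor.fV v
      constructor
      · rintro rfl; rw [← φ.invMor.tgt]
      · intro h
        have := congrArg φ.toMor.fV h
        rw [φ.toMor.tgt, φ.rightE, φ.rightV] at this
        exact this
    rw [Nat.card_congr hequiv]
    exact hle

theorem isTree_iff (φ : Iso G H) : IsTree G ↔ IsTree H :=
  ⟨φ.isTree_of, φ.symm.isTree_of⟩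

theorem card_V (φ : Iso G H) : Nat.card G.V = Nat.card H.V := Nat.card_congr φ.eV

theorem card_label (φ : Iso G H) (x : LV) :
    Nat.card {v : G.V // G.l v = some x} = Nat.card {v : H.V // H.l v = some x} :=
  Nat.card_congr (Equiv.subtypeEquiv φ.eV fun v => by rw [show φ.eV v = φ.toMor.fV v from rfl, φ.l_eq])

end Iso

end IsoLemmas


section TreeSystem

attribute [local instance] Classical.propDecidable

theorem card_le_one_of_subsingleton (α : Type) [Subsingleton α] : Nat.card α ≤ 1 := by
  rcases isEmpty_or_nonempty α with h | h
  · simp [Nat.card_of_isEmpty]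
  · exact le_of_eq Nat.card_unique

theorem fin_two_eq_one {w : Fin 2} (h : w ≠ 0) : w = 1 := by
  fin_cases w
  · exact absurd rfl h
  · rfl

/-- invariant maintained by the tree-recognition system -/
def TRInv (H : RGraph NodeLab Unit) : Prop :=
  (∀ x, (H.l x).isSome) ∧ (∀ x, (H.p x).isSome) ∧ (∃! x, H.p x = some true) ∧
  (∀ x, H.p x = some true → H.l x = some .square) ∧
  (∀ x, H.l x = some .tri → ∃ (c : List H.E) (w : H.V),
    c ≠ [] ∧ IsDirWalk H x c w ∧ H.p w = some true)

theorem Iso.trinv_of {G H : RGraph NodeLab Unit} (φ : Iso G H) (h : TRInv G) : TRInv H := by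
  obtain ⟨h1, h2, ⟨r, hr, hun⟩, h4, h5⟩ := h
  refine ⟨?_, ?_, ⟨φ.toMor.fV r, (φ.p_eq r).trans hr, ?_⟩, ?_, ?_⟩
  · intro x; rw [← φ.rightV x, φ.l_eq]; exact h1 _
  · intro x; rw [← φ.rightV x, φ.p_eq]; exact h2 _
  · intro y hy
    have : G.p (φ.invMor.fV y) = some true := (φ.symm.p_eq y).trans hy
    have := hun _ this
    rw [← φ.rightV y, this]
  · intro x hx
    have hx' : G.p (φ.invMor.fV x) = some true := (φ.symm.p_eq x).trans hx
    have := h4 _ hx'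
    rw [← φ.rightV x, φ.l_eq]
    exact this
  · intro x hx
    have hx' : G.l (φ.invMor.fV x) = some .tri := (φ.symm.l_eq x).trans hx
    obtain ⟨c, w, hc, hw, hpw⟩ := h5 _ hx'
    refine ⟨c.map φ.toMor.fE, φ.toMor.fV w, by simpa using hc, ?_, ?_⟩
    · have := φ.toMor.dirWalk_map hw
      rwa [φ.rightV] at this
    · rw [φ.p_eq]; exact hpw

/-- deletion of the leaf `v` (with unique incident edge `e`) and re-rooting at `u` -/
noncomputable def prune (G : RGraph NodeLab Unit) (u v : G.V) (e : G.E)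
    (h : ∀ e', e' ≠ e → G.s e' ≠ v ∧ G.t e' ≠ v) : RGraph NodeLab Unit where
  V := {x : G.V // x ≠ v}
  E := {x : G.E // x ≠ e}
  finV := inferInstance
  finE := inferInstance
  s := fun x => ⟨G.s x.1, (h x.1 x.2).1⟩
  t := fun x => ⟨G.t x.1, (h x.1 x.2).2⟩
  l := fun x => if x.1 = u then some .square else G.l x.1
  m := fun _ => ()
  p := fun x => if x.1 = u then some true else G.p x.1

/-- moving the root from `u` to `v`, marking `u` with a triangle -/
noncomputable def reroot (G : RGraph NodeLab Unit) (u v : G.V) : RGraph NodeLab Unit :=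
  { G with
    l := fun x => if x = u then some .tri else if x = v then some .square else G.l x
    p := fun x => if x = u then some false else if x = v then some true else G.p x }

section PruneLemmas

variable {G : RGraph NodeLab Unit} {u v : G.V} {e : G.E}

theorem walk_from_v_forces (hinc : ∀ e', e' ≠ e → G.s e' ≠ v ∧ G.t e' ≠ v)
    {q : G.E × Bool} {l y} (hw : IsUndirWalk G v (q :: l) y) : q.1 = e := by
  obtain ⟨e', b⟩ := q
  by_contra hne
  cases b
  · exact (hinc e' hne).2 hw.1
  · exact (hinc e' hne).1 hw.1

theorem prune_walk_avoid (huv : u ≠ v) (hsu : G.s e = u) (htv : G.t e = v)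
    (hinc : ∀ e', e' ≠ e → G.s e' ≠ v ∧ G.t e' ≠ v) :
    ∀ (n : ℕ) (l : List (G.E × Bool)) (x y : G.V) (hx : x ≠ v) (hy : y ≠ v),
      l.length ≤ n → IsUndirWalk G x l y →
      ∃ l', IsUndirWalk (prune G u v e hinc) ⟨x, hx⟩ l' ⟨y, hy⟩ := by
  intro n
  induction n with
  | zero =>
    intro l x y hx hy hl hw
    rw [Nat.le_zero, List.length_eq_zero_iff] at hl
    subst hl
    exact ⟨[], Subtype.ext hw⟩
  | succ n ih =>
    intro l x y hx hy hl hw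
    match l, hw with
    | [], hw => exact ⟨[], Subtype.ext hw⟩
    | (e', true) :: rest, hw =>
      by_cases hee : e' = e
      · subst hee
        have hrest := hw.2
        rw [htv] at hrest
        match rest, hrest with
        | [], h2 => exact absurd h2.symm hy
        | (e'', true) :: rest', h2 =>
          have heq : e'' = e' := by
            by_contra hne
            exact (hinc e'' hne).1 h2.1
          rw [heq] at h2
          have hcon : G.s e' = v := h2.1
          rw [hsu] at hcon
          exact absurd hcon huv
        | (e'', false) :: rest', h2 =>
          have heq : e'' = e' := by
            by_contra hne
            exact (hinc e'' hne).2 h2.1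
          have h2' := h2.2
          rw [heq, hsu] at h2'
          have hxu : x = u := by rw [← hsu]; exact hw.1.symm
          rw [← hxu] at h2'
          refine ih rest' x y hx hy ?_ h2'
          simp only [List.length_cons] at hl ⊢
          omega
      · obtain ⟨l', hl'⟩ := ih rest (G.t e') y (hinc e' hee).2 hy
          (by simp only [List.length_cons] at hl; omega) hw.2
        exact ⟨(⟨e', hee⟩, true) :: l', Subtype.ext hw.1, hl'⟩
    | (e', false) :: rest, hw =>
      by_cases hee : e' = e
      · subst hee
        exact absurd (hw.1.symm.trans htv) hx
      · obtain ⟨l', hl'⟩ := ih rest (G.s e') y (hinc e' hee).1 hy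
          (by simp only [List.length_cons] at hl; omega) hw.2
        exact ⟨(⟨e', hee⟩, false) :: l', Subtype.ext hw.1, hl'⟩

theorem prune_walk_lift {hinc : ∀ e', e' ≠ e → G.s e' ≠ v ∧ G.t e' ≠ v} :
    ∀ {l} {a b : {x : G.V // x ≠ v}}, IsUndirWalk (prune G u v e hinc) a l b →
      IsUndirWalk G a.1 (l.map fun q => (q.1.1, q.2)) b.1
  | [], a, b, h => congrArg Subtype.val h
  | (e', true) :: rest, a, b, h => ⟨congrArg Subtype.val h.1, prune_walk_lift h.2⟩
  | (e', false) :: rest, a, b, h => ⟨congrArg Subtype.val h.1, prune_walk_lift h.2⟩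

theorem prune_walk_drop {hinc : ∀ e', e' ≠ e → G.s e' ≠ v ∧ G.t e' ≠ v} :
    ∀ (l : List (G.E × Bool)) (a b : G.V) (ha : a ≠ v) (hb : b ≠ v),
      IsUndirWalk G a l b → (∀ q ∈ l, q.1 ≠ e) →
      ∃ l', IsUndirWalk (prune G u v e hinc) ⟨a, ha⟩ l' ⟨b, hb⟩ ∧
        l'.map (fun q => (q.1.1, q.2)) = l
  | [], a, b, ha, hb, hw, _ => ⟨[], Subtype.ext hw, rfl⟩
  | (e', true) :: rest, a, b, ha, hb, hw, hq => by
      have hne : e' ≠ e := hq (e', true) List.mem_cons_self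
      obtain ⟨l', h1, h2⟩ := prune_walk_drop (hinc := hinc) rest (G.t e') b
        (hinc e' hne).2 hb hw.2 (fun q hmem => hq q (List.mem_cons_of_mem _ hmem))
      exact ⟨(⟨e', hne⟩, true) :: l', ⟨Subtype.ext hw.1, h1⟩, by simp [h2]⟩
  | (e', false) :: rest, a, b, ha, hb, hw, hq => by
      have hne : e' ≠ e := hq (e', false) List.mem_cons_self
      obtain ⟨l', h1, h2⟩ := prune_walk_drop (hinc := hinc) rest (G.s e') b
        (hinc e' hne).1 hb hw.2 (fun q hmem => hq q (List.mem_cons_of_mem _ hmem))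
      exact ⟨(⟨e', hne⟩, false) :: l', ⟨Subtype.ext hw.1, h1⟩, by simp [h2]⟩

theorem no_walk_v_to_u (huv : u ≠ v) (hinc : ∀ e', e' ≠ e → G.s e' ≠ v ∧ G.t e' ≠ v)
    {L : List (G.E × Bool)} (hW : IsUndirWalk G v L u) (hL : ∀ q ∈ L, q.1 ≠ e) : False := by
  match L, hW with
  | [], hW => exact huv hW.symm
  | q :: l', hW => exact hL q List.mem_cons_self (walk_from_v_forces hinc hW)

theorem prune_tree (huv : u ≠ v) (hsu : G.s e = u) (htv : G.t e = v)
    (hinc : ∀ e', e' ≠ e → G.s e' ≠ v ∧ G.t e' ≠ v) :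
    IsTree G ↔ IsTree (prune G u v e hinc) := by
  constructor
  · rintro ⟨-, hconn, hcyc, hdeg⟩
    refine ⟨⟨⟨u, huv⟩⟩, ?_, ?_, ?_⟩
    · intro x y
      obtain ⟨l, hl⟩ := hconn x.1 y.1
      obtain ⟨l', hl'⟩ := prune_walk_avoid huv hsu htv hinc l.length l x.1 y.1 x.2 y.2 le_rfl hl
      exact ⟨l', hl'⟩
    · rintro ⟨a, l, hne, hw, hnd⟩
      refine hcyc ⟨a.1, l.map fun q => (q.1.1, q.2), by simpa using hne, prune_walk_lift hw, ?_⟩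
      rw [List.map_map]
      have := hnd.map Subtype.val_injective
      replace this := Eq.mp (congrArg List.Nodup List.map_map) this
      exact this
    · intro x
      refine le_trans (Nat.card_le_card_of_injective
        (fun q : {e' : (prune G u v e hinc).E // (prune G u v e hinc).t e' = x} =>
          (⟨q.1.1, congrArg Subtype.val q.2⟩ : {e' : G.E // G.t e' = x.1})) ?_) (hdeg x.1)
      intro q1 q2 hq
      have hval : q1.1.1 = q2.1.1 := congrArg (fun z : {e' : G.E // G.t e' = x.1} => z.1) hq
      exact Subtype.ext (Subtype.ext hval)
  · rintro ⟨-, hconn, hcyc, hdeg⟩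
    refine ⟨⟨u⟩, ?_, ?_, ?_⟩
    · intro x y
      have wx : ∃ l, IsUndirWalk G x l u := by
        by_cases hx : x = v
        · subst hx
          exact ⟨[(e, false)], htv, hsu⟩
        · exact ⟨_, prune_walk_lift (hconn ⟨x, hx⟩ ⟨u, huv⟩).choose_spec⟩
      have wy : ∃ l, IsUndirWalk G u l y := by
        by_cases hy : y = v
        · subst hy
          exact ⟨[(e, true)], hsu, htv⟩
        · exact ⟨_, prune_walk_lift (hconn ⟨u, huv⟩ ⟨y, hy⟩).choose_spec⟩
      obtain ⟨l1, hl1⟩ := wx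
      obtain ⟨l2, hl2⟩ := wy
      exact ⟨l1 ++ l2, hl1.append hl2⟩
    · rintro ⟨x, l, hne, hw, hnd⟩
      by_cases hel : ∀ q ∈ l, q.1 ≠ e
      · match l, hw with
        | [], _ => exact hne rfl
        | q :: l', hw =>
          have hx : x ≠ v := by
            rintro rfl
            exact hel q List.mem_cons_self (walk_from_v_forces hinc hw)
          obtain ⟨l'', h1, h2⟩ := prune_walk_drop (hinc := hinc) (q :: l') x x hx hx hw hel
          refine hcyc ⟨⟨x, hx⟩, l'', ?_, h1, ?_⟩
          · rintro rfl
            simp at h2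
          · have : (q :: l').map Prod.fst = (l''.map Prod.fst).map Subtype.val := by
              rw [← h2, List.map_map]; exact (List.map_map (f := Prod.fst) (g := Subtype.val)).symm
            rw [this] at hnd
            exact hnd.of_map
      · push_neg at hel
        obtain ⟨⟨e', b⟩, hmem, rfl⟩ := hel
        obtain ⟨l₁, l₂, rfl⟩ := List.append_of_mem hmem
        obtain ⟨m, w1, w2⟩ := hw.split
        have hnd' : ((e', b).1 ∉ (l₁.map Prod.fst ++ l₂.map Prod.fst)) := by
          rw [List.map_append, List.map_cons] at hnd
          exact (List.nodup_cons.mp (List.nodup_middle.mp hnd)).1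
        have he1 : e' ∉ l₁.map Prod.fst := fun hc => hnd' (List.mem_append.mpr (Or.inl hc))
        have he2 : e' ∉ l₂.map Prod.fst := fun hc => hnd' (List.mem_append.mpr (Or.inr hc))
        cases b
        · -- traversed backwards: m = v, rest of walk goes from u
          have hm : m = v := by rw [← htv]; exact w2.1.symm
          rw [hm] at w1
          have w2' : IsUndirWalk G u l₂ x := by rw [← hsu]; exact w2.2
          have W : IsUndirWalk G u (l₂ ++ l₁) v := w2'.append w1
          have W' := W.reverse
          refine no_walk_v_to_u huv hinc W' ?_
          intro q hq
          obtain ⟨q0, hq0, rfl⟩ := List.mem_map.mp hq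
          have hq0' := List.mem_reverse.mp hq0
          rcases List.mem_append.mp hq0' with h | h
          · exact fun hc => he2 (List.mem_map.mpr ⟨q0, h, hc⟩)
          · exact fun hc => he1 (List.mem_map.mpr ⟨q0, h, hc⟩)
        · -- traversed forwards: m = u, rest goes from v
          have hm : m = u := by rw [← hsu]; exact w2.1.symm
          rw [hm] at w1
          have w2' : IsUndirWalk G v l₂ x := by rw [← htv]; exact w2.2
          have W : IsUndirWalk G v (l₂ ++ l₁) u := w2'.append w1
          refine no_walk_v_to_u huv hinc W ?_
          intro q hq
          rcases List.mem_append.mp hq with h | h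
          · exact fun hc => he2 (List.mem_map.mpr ⟨q, h, hc⟩)
          · exact fun hc => he1 (List.mem_map.mpr ⟨q, h, hc⟩)
    · intro x
      by_cases hx : x = v
      · have hss : Subsingleton {e' : G.E // G.t e' = x} := by
          constructor
          rintro ⟨e1, h1⟩ ⟨e2, h2⟩
          rw [hx] at h1 h2
          have he1 : e1 = e := by by_contra hc; exact (hinc e1 hc).2 h1
          have he2 : e2 = e := by by_contra hc; exact (hinc e2 hc).2 h2
          exact Subtype.ext (he1.trans he2.symm)
        exact @card_le_one_of_subsingleton _ hss
      · refine le_trans (Nat.card_le_card_of_injective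
          (fun q : {e' : G.E // G.t e' = x} =>
            (⟨⟨q.1, fun hc => hx (by rw [← q.2, hc, htv])⟩, Subtype.ext q.2⟩ :
              {e' : {x' : G.E // x' ≠ e} // (prune G u v e hinc).t e' = ⟨x, hx⟩})) ?_)
          (hdeg ⟨x, hx⟩)
        intro q1 q2 hq
        have hval : q1.1 = q2.1 := congrArg (fun z => z.1.1) hq
        exact Subtype.ext hval

end PruneLemmas

end TreeSystem


section Batch4

attribute [local instance] Classical.propDecidable

variable {G : RGraph NodeLab Unit} {u v : G.V} {e : G.E}

theorem prune_dirwalk_to_root (huv : u ≠ v) (hsu : G.s e = u) (htv : G.t e = v)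
    (hinc : ∀ e', e' ≠ e → G.s e' ≠ v ∧ G.t e' ≠ v) :
    ∀ (c : List G.E) (x : G.V) (hx : x ≠ v), IsDirWalk G x c v →
      ∃ c', IsDirWalk (prune G u v e hinc) ⟨x, hx⟩ c' ⟨u, huv⟩
  | [], x, hx, hw => absurd hw hx
  | e' :: rest, x, hx, hw => by
      by_cases hee : e' = e
      · subst hee
        have hrest := hw.2
        rw [htv] at hrest
        match rest, hrest with
        | [], _ =>
          have hxu : x = u := by rw [← hw.1, hsu]
          exact ⟨[], Subtype.ext hxu⟩
        | e'' :: rest', h2 =>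
          have heq : e'' = e' := by
            by_contra hne
            exact (hinc e'' hne).1 h2.1
          rw [heq] at h2
          have hcon : G.s e' = v := h2.1
          rw [hsu] at hcon
          exact absurd hcon huv
      · obtain ⟨c', hc'⟩ := prune_dirwalk_to_root huv hsu htv hinc rest (G.t e')
          (hinc e' hee).2 hw.2
        exact ⟨⟨e', hee⟩ :: c', Subtype.ext hw.1, hc'⟩

theorem prune_trinv (huv : u ≠ v) (hsu : G.s e = u) (htv : G.t e = v)
    (hpv : G.p v = some true)
    (hinc : ∀ e', e' ≠ e → G.s e' ≠ v ∧ G.t e' ≠ v)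
    (hI : TRInv G) : TRInv (prune G u v e hinc) := by
  obtain ⟨h1, h2, ⟨r, hr, hun⟩, h4, h5⟩ := hI
  have hvr : v = r := hun v hpv
  refine ⟨?_, ?_, ⟨⟨u, huv⟩, ?_, ?_⟩, ?_, ?_⟩
  · intro x
    show (if x.1 = u then some NodeLab.square else G.l x.1).isSome = true
    split
    · rfl
    · exact h1 x.1
  · intro x
    show (if x.1 = u then some true else G.p x.1).isSome = true
    split
    · rfl
    · exact h2 x.1
  · show (if u = u then some true else G.p u) = some true
    rw [if_pos rfl]
  · rintro ⟨y, hy⟩ hpy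
    have hpy' : (if y = u then some true else G.p y) = some true := hpy
    refine Subtype.ext ?_
    by_cases h : y = u
    · exact h
    · rw [if_neg h] at hpy'
      exact absurd ((hun y hpy').trans hvr.symm) hy
  · rintro ⟨y, hy⟩ hpy
    have hpy' : (if y = u then some true else G.p y) = some true := hpy
    show (if y = u then some NodeLab.square else G.l y) = some NodeLab.square
    by_cases h : y = u
    · rw [if_pos h]
    · rw [if_neg h] at hpy'
      exact absurd ((hun y hpy').trans hvr.symm) hy
  · rintro ⟨y, hy⟩ hly
    have hyu : y ≠ u := by
      intro hc
      have : (if y = u then some NodeLab.square else G.l y) = some NodeLab.tri := hly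
      rw [if_pos hc] at this
      exact absurd this (by simp)
    have hly' : G.l y = some NodeLab.tri := by
      have : (if y = u then some NodeLab.square else G.l y) = some NodeLab.tri := hly
      rwa [if_neg hyu] at this
    obtain ⟨c, w, hcne, hw, hpw⟩ := h5 y hly'
    have hwv : w = v := (hun w hpw).trans hvr.symm
    rw [hwv] at hw
    obtain ⟨c', hc'⟩ := prune_dirwalk_to_root huv hsu htv hinc c y hy hw
    match c', hc' with
    | [], hc' =>
      exact absurd (congrArg Subtype.val hc') hyu
    | q :: c'', hc' =>
      refine ⟨q :: c'', ⟨u, huv⟩, List.cons_ne_nil _ _, hc', ?_⟩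
      show (if u = u then some true else G.p u) = some true
      rw [if_pos rfl]

theorem reroot_dirwalk : ∀ {c : List G.E} {a b : G.V},
    IsDirWalk G a c b → IsDirWalk (reroot G u v) a c b
  | [], _, _, h => h
  | _ :: _, _, _, h => ⟨h.1, reroot_dirwalk h.2⟩

theorem reroot_undir_up : ∀ {c : List (G.E × Bool)} {a b : G.V},
    IsUndirWalk G a c b → IsUndirWalk (reroot G u v) a c b
  | [], _, _, h => h
  | (_, true) :: _, _, _, h => ⟨h.1, reroot_undir_up h.2⟩
  | (_, false) :: _, _, _, h => ⟨h.1, reroot_undir_up h.2⟩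

theorem reroot_undir_down : ∀ {c : List (G.E × Bool)} {a b : G.V},
    IsUndirWalk (reroot G u v) a c b → IsUndirWalk G a c b
  | [], _, _, h => h
  | (_, true) :: _, _, _, h => ⟨h.1, reroot_undir_down h.2⟩
  | (_, false) :: _, _, _, h => ⟨h.1, reroot_undir_down h.2⟩

theorem reroot_tree : IsTree (reroot G u v) ↔ IsTree G := by
  constructor
  · rintro ⟨hne, hconn, hcyc, hdeg⟩
    refine ⟨hne, fun a b => (hconn a b).imp fun l hl => reroot_undir_down hl, ?_, hdeg⟩
    rintro ⟨x, l, h1, h2, h3⟩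
    exact hcyc ⟨x, l, h1, reroot_undir_up h2, h3⟩
  · rintro ⟨hne, hconn, hcyc, hdeg⟩
    refine ⟨hne, fun a b => (hconn a b).imp fun l hl => reroot_undir_up hl, ?_, hdeg⟩
    rintro ⟨x, l, h1, h2, h3⟩
    exact hcyc ⟨x, l, h1, reroot_undir_down h2, h3⟩

theorem reroot_trinv (huv : u ≠ v) (hsu : G.s e = u) (htv : G.t e = v)
    (hpu : G.p u = some true) (hI : TRInv G) : TRInv (reroot G u v) := by
  obtain ⟨h1, h2, ⟨r, hr, hun⟩, h4, h5⟩ := hI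
  have hur : u = r := hun u hpu
  refine ⟨?_, ?_, ⟨v, ?_, ?_⟩, ?_, ?_⟩
  · intro x
    show (if x = u then some NodeLab.tri else
      if x = v then some NodeLab.square else G.l x).isSome = true
    split
    · rfl
    · split
      · rfl
      · exact h1 x
  · intro x
    show (if x = u then some false else if x = v then some true else G.p x).isSome = true
    split
    · rfl
    · split
      · rfl
      · exact h2 x
  · show (if v = u then some false else if v = v then some true else G.p v) = some true
    rw [if_neg (Ne.symm huv), if_pos rfl]
  · intro y hpy
    have hpy' : (if y = u then some false else if y = v then some true else G.p y) =
      some true := hpy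
    by_cases h : y = u
    · rw [if_pos h] at hpy'
      exact absurd hpy' (by simp)
    · rw [if_neg h] at hpy'
      by_cases h2' : y = v
      · exact h2'
      · rw [if_neg h2'] at hpy'
        exact absurd ((hun y hpy').trans hur.symm) h
  · intro x hpx
    have hpx' : (if x = u then some false else if x = v then some true else G.p x) =
      some true := hpx
    have hxu : x ≠ u := by
      intro hc
      rw [if_pos hc] at hpx'
      exact absurd hpx' (by simp)
    rw [if_neg hxu] at hpx'
    have hxv : x = v := by
      by_contra hc
      rw [if_neg hc] at hpx'
      exact absurd ((hun x hpx').trans hur.symm) hxu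
    show (if x = u then some NodeLab.tri else
      if x = v then some NodeLab.square else G.l x) = some NodeLab.square
    rw [if_neg hxu, if_pos hxv]
  · intro x hlx
    have hlx' : (if x = u then some NodeLab.tri else
      if x = v then some NodeLab.square else G.l x) = some NodeLab.tri := hlx
    have hproot : (reroot G u v).p v = some true := by
      show (if v = u then some false else if v = v then some true else G.p v) = some true
      rw [if_neg (Ne.symm huv), if_pos rfl]
    by_cases h : x = u
    · refine ⟨[e], v, List.cons_ne_nil _ _, ?_, hproot⟩
      exact ⟨hsu.trans h.symm, htv⟩
    · rw [if_neg h] at hlx'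
      have hxv : x ≠ v := by
        intro hc
        rw [if_pos hc] at hlx'
        exact absurd hlx' (by simp)
      rw [if_neg hxv] at hlx'
      obtain ⟨c, w, hcne, hw, hpw⟩ := h5 x hlx'
      have hwu : w = u := (hun w hpw).trans hur.symm
      rw [hwu] at hw
      refine ⟨c ++ [e], v, fun h => List.cons_ne_nil e [] (List.append_eq_nil_iff.mp h).2, ?_, hproot⟩
      exact (reroot_dirwalk hw).append (⟨hsu, htv⟩ : IsDirWalk (reroot G u v) u [e] v)

/-! ### the termination measure -/

noncomputable def mu (G : RGraph NodeLab Unit) : ℕ :=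
  2 * Nat.card G.V * Nat.card G.V + Nat.card {x : G.V // G.l x = some NodeLab.square}

theorem Iso.mu_eq {G H : RGraph NodeLab Unit} (φ : Iso G H) : mu G = mu H := by
  rw [mu, mu, φ.card_V, φ.card_label]

theorem card_subtype_ne {α : Type} [Finite α] (v : α) :
    Nat.card {x : α // x ≠ v} + 1 = Nat.card α := by
  have h1 : Nat.card α = Nat.card ({x : α // x = v} ⊕ {x : α // ¬ x = v}) :=
    Nat.card_congr (Equiv.sumCompl (· = v)).symm
  have h2 : Nat.card {x : α // x = v} = 1 := by
    have : Subsingleton {x : α // x = v} := ⟨by rintro ⟨a, rfl⟩ ⟨b, hb⟩; exact (Subtype.ext hb).symm⟩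
    have : Nonempty {x : α // x = v} := ⟨⟨v, rfl⟩⟩
    exact Nat.card_unique
  have h3 : Nat.card {x : α // ¬ x = v} = Nat.card {x : α // x ≠ v} := rfl
  rw [h1, Nat.card_sum, h2, h3]
  omega

theorem card_subtype_and_ne {α : Type} [Finite α] (P : α → Prop) (v : α) (hv : P v) :
    Nat.card {x : α // P x ∧ x ≠ v} + 1 = Nat.card {x : α // P x} := by
  have h1 := card_subtype_ne (α := {x : α // P x}) ⟨v, hv⟩
  have h2 : Nat.card {x : {y : α // P y} // x ≠ ⟨v, hv⟩} = Nat.card {x : α // P x ∧ x ≠ v} := by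
    refine Nat.card_congr (Equiv.trans (Equiv.subtypeEquivRight fun x => ?_)
      (Equiv.subtypeSubtypeEquivSubtypeInter P (· ≠ v)))
    constructor
    · intro h hc
      exact h (Subtype.ext hc)
    · intro h hc
      exact h (congrArg Subtype.val hc)
  rw [← h2, h1]

theorem card_sq_le (G : RGraph NodeLab Unit) :
    Nat.card {x : G.V // G.l x = some NodeLab.square} ≤ Nat.card G.V :=
  Nat.card_le_card_of_injective Subtype.val Subtype.val_injective

theorem prune_card_V (hinc : ∀ e', e' ≠ e → G.s e' ≠ v ∧ G.t e' ≠ v) :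
    Nat.card (prune G u v e hinc).V + 1 = Nat.card G.V := card_subtype_ne v

theorem mu_prune_lt (huv : u ≠ v) (hinc : ∀ e', e' ≠ e → G.s e' ≠ v ∧ G.t e' ≠ v) :
    mu (prune G u v e hinc) < mu G := by
  have h1 := prune_card_V (u := u) hinc
  have h2 := card_sq_le (prune G u v e hinc)
  rw [mu, mu, ← h1]
  nlinarith [h2, Nat.zero_le (Nat.card {x : G.V // G.l x = some NodeLab.square})]

theorem mu_reroot_lt (huv : u ≠ v) (hlu : G.l u = some NodeLab.square)
    (hlv : G.l v = some NodeLab.square) :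
    mu (reroot G u v) + 1 = mu G := by
  have hV : Nat.card (reroot G u v).V = Nat.card G.V := rfl
  have hsq : Nat.card {x : (reroot G u v).V // (reroot G u v).l x = some NodeLab.square} + 1 =
      Nat.card {x : G.V // G.l x = some NodeLab.square} := by
    have hiff : ∀ x : G.V, (reroot G u v).l x = some NodeLab.square ↔
        (G.l x = some NodeLab.square ∧ x ≠ u) := by
      intro x
      show (if x = u then some NodeLab.tri else
        if x = v then some NodeLab.square else G.l x) = some NodeLab.square ↔ _
      by_cases h : x = u
      · rw [if_pos h]
        simp [h]
      · rw [if_neg h]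
        by_cases h2 : x = v
        · rw [if_pos h2]
          simp [h, h2, hlv, Ne.symm huv]
        · rw [if_neg h2]
          simp [h]
    have hA : Nat.card {x : (reroot G u v).V // (reroot G u v).l x = some NodeLab.square} =
        Nat.card {x : G.V // G.l x = some NodeLab.square ∧ x ≠ u} :=
      Nat.card_congr (Equiv.subtypeEquivRight hiff)
    rw [hA]
    exact card_subtype_and_ne _ u hlu
  rw [mu, mu, hV]
  omega

end Batch4


section Batch5

attribute [local instance] Classical.propDecidable

variable {G : RGraph NodeLab Unit}

/-! ### facts about matches of `r0` -/

theorem r0_hinc {g : Morphism r0.L G} (h : r0.Applicable G g) :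
    ∀ e', e' ≠ g.fE () → G.s e' ≠ g.fV (1 : Fin 2) ∧ G.t e' ≠ g.fV (1 : Fin 2) := by
  intro e' hne
  exact h.2 e' (fun _ => Ne.symm hne) (1 : Fin 2) (fun _ hc => absurd (show (0 : Fin 2) = 1 from hc) (by decide))

theorem r0_delV {g : Morphism r0.L G} (hinj : g.Injective) (x : G.V) :
    x ∈ r0.DelV G g ↔ x = g.fV (1 : Fin 2) := by
  constructor
  · rintro ⟨w, hw, rfl⟩
    rw [fin_two_eq_one (Ne.symm (hw ()))]
  · rintro rfl
    exact ⟨(1 : Fin 2), fun _ hc => absurd (show (0 : Fin 2) = 1 from hc) (by decide), rfl⟩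

theorem r0_delE {g : Morphism r0.L G} (x : G.E) :
    x ∈ r0.DelE G g ↔ x = g.fE () := by
  constructor
  · rintro ⟨e', _, rfl⟩
    rfl
  · rintro rfl
    exact ⟨(), fun k => k.elim, rfl⟩

noncomputable def r0_result_iso (g : Morphism r0.L G) (h : r0.Applicable G g)
    (hinc : ∀ e', e' ≠ g.fE () → G.s e' ≠ g.fV (1 : Fin 2) ∧ G.t e' ≠ g.fV (1 : Fin 2)) :
    Iso (r0.result G g h) (prune G (g.fV (0 : Fin 2)) (g.fV (1 : Fin 2)) (g.fE ()) hinc) := by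
  refine Iso.ofStrict
    (⟨Sum.elim (fun x => ⟨x.1, fun hc => x.2 ((r0_delV h.1 x.1).mpr hc)⟩)
        (fun y => (y.2 y.1 rfl).elim),
      fun x => Sum.inl ⟨x.1, fun hd => x.2 ((r0_delV h.1 x.1).mp hd)⟩,
      ?_, ?_⟩)
    (⟨Sum.elim (fun x => ⟨x.1, fun hc => x.2 ((r0_delE x.1).mpr hc)⟩)
        (fun y => y.1.elim),
      fun x => Sum.inl ⟨x.1, fun hd => x.2 ((r0_delE x.1).mp hd)⟩,
      ?_, ?_⟩) ?_ ?_ ?_ ?_ ?_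
  · rintro (x | y)
    · rfl
    · exact (y.2 y.1 rfl).elim
  · intro x; rfl
  · rintro (x | y)
    · rfl
    · exact y.1.elim
  · intro x; rfl
  · rintro (x | y)
    · rfl
    · exact y.1.elim
  · rintro (x | y)
    · rfl
    · exact y.1.elim
  · rintro (x | y)
    · rfl
    · exact y.1.elim
  · rintro (x | y)
    · show (if x.1 = g.fV (0 : Fin 2) then some NodeLab.square else G.l x.1) = (r0.result G g h).l (Sum.inl x)
      by_cases hx : x.1 = g.fV (0 : Fin 2)
      · rw [if_pos hx]
        have hex : ∃ k : r0.K.V, r0.K.l k = none ∧ g.fV (r0.incL.fV k) = x.1 := ⟨(), rfl, hx.symm⟩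
        show _ = if hk : ∃ k : r0.K.V, r0.K.l k = none ∧ g.fV (r0.incL.fV k) = x.1 then
          r0.R.l (r0.incR.fV hk.choose) else G.l x.1
        rw [dif_pos hex]
        rfl
      · rw [if_neg hx]
        have hnex : ¬ ∃ k : r0.K.V, r0.K.l k = none ∧ g.fV (r0.incL.fV k) = x.1 := by
          rintro ⟨k, -, hk2⟩
          exact hx hk2.symm
        show _ = if hk : ∃ k : r0.K.V, r0.K.l k = none ∧ g.fV (r0.incL.fV k) = x.1 then
          r0.R.l (r0.incR.fV hk.choose) else G.l x.1
        rw [dif_neg hnex]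
    · exact (y.2 y.1 rfl).elim
  · rintro (x | y)
    · show (if x.1 = g.fV (0 : Fin 2) then some true else G.p x.1) = (r0.result G g h).p (Sum.inl x)
      by_cases hx : x.1 = g.fV (0 : Fin 2)
      · rw [if_pos hx]
        have hex : ∃ k : r0.K.V, r0.K.p k = none ∧ g.fV (r0.incL.fV k) = x.1 := ⟨(), rfl, hx.symm⟩
        show _ = if hk : ∃ k : r0.K.V, r0.K.p k = none ∧ g.fV (r0.incL.fV k) = x.1 then
          r0.R.p (r0.incR.fV hk.choose) else G.p x.1
        rw [dif_pos hex]
        rfl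
      · rw [if_neg hx]
        have hnex : ¬ ∃ k : r0.K.V, r0.K.p k = none ∧ g.fV (r0.incL.fV k) = x.1 := by
          rintro ⟨k, -, hk2⟩
          exact hx hk2.symm
        show _ = if hk : ∃ k : r0.K.V, r0.K.p k = none ∧ g.fV (r0.incL.fV k) = x.1 then
          r0.R.p (r0.incR.fV hk.choose) else G.p x.1
        rw [dif_neg hnex]
    · exact (y.2 y.1 rfl).elim


/-! ### facts about matches of `r1` -/

theorem r1_hinc {g : Morphism r1.L G} (h : r1.Applicable G g) :
    ∀ e', e' ≠ g.fE () → G.s e' ≠ g.fV (1 : Fin 2) ∧ G.t e' ≠ g.fV (1 : Fin 2) := by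
  intro e' hne
  exact h.2 e' (fun _ => Ne.symm hne) (1 : Fin 2) (fun _ hc => absurd (show (0 : Fin 2) = 1 from hc) (by decide))

theorem r1_delV {g : Morphism r1.L G} (hinj : g.Injective) (x : G.V) :
    x ∈ r1.DelV G g ↔ x = g.fV (1 : Fin 2) := by
  constructor
  · rintro ⟨w, hw, rfl⟩
    rw [fin_two_eq_one (Ne.symm (hw ()))]
  · rintro rfl
    exact ⟨(1 : Fin 2), fun _ hc => absurd (show (0 : Fin 2) = 1 from hc) (by decide), rfl⟩

theorem r1_delE {g : Morphism r1.L G} (x : G.E) :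
    x ∈ r1.DelE G g ↔ x = g.fE () := by
  constructor
  · rintro ⟨e', _, rfl⟩
    rfl
  · rintro rfl
    exact ⟨(), fun k => k.elim, rfl⟩

noncomputable def r1_result_iso (g : Morphism r1.L G) (h : r1.Applicable G g)
    (hinc : ∀ e', e' ≠ g.fE () → G.s e' ≠ g.fV (1 : Fin 2) ∧ G.t e' ≠ g.fV (1 : Fin 2)) :
    Iso (r1.result G g h) (prune G (g.fV (0 : Fin 2)) (g.fV (1 : Fin 2)) (g.fE ()) hinc) := by
  refine Iso.ofStrict
    (⟨Sum.elim (fun x => ⟨x.1, fun hc => x.2 ((r1_delV h.1 x.1).mpr hc)⟩)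
        (fun y => (y.2 y.1 rfl).elim),
      fun x => Sum.inl ⟨x.1, fun hd => x.2 ((r1_delV h.1 x.1).mp hd)⟩,
      ?_, ?_⟩)
    (⟨Sum.elim (fun x => ⟨x.1, fun hc => x.2 ((r1_delE x.1).mpr hc)⟩)
        (fun y => y.1.elim),
      fun x => Sum.inl ⟨x.1, fun hd => x.2 ((r1_delE x.1).mp hd)⟩,
      ?_, ?_⟩) ?_ ?_ ?_ ?_ ?_
  · rintro (x | y)
    · rfl
    · exact (y.2 y.1 rfl).elim
  · intro x; rfl
  · rintro (x | y)
    · rfl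
    · exact y.1.elim
  · intro x; rfl
  · rintro (x | y)
    · rfl
    · exact y.1.elim
  · rintro (x | y)
    · rfl
    · exact y.1.elim
  · rintro (x | y)
    · rfl
    · exact y.1.elim
  · rintro (x | y)
    · show (if x.1 = g.fV (0 : Fin 2) then some NodeLab.square else G.l x.1) = (r1.result G g h).l (Sum.inl x)
      by_cases hx : x.1 = g.fV (0 : Fin 2)
      · rw [if_pos hx]
        have hex : ∃ k : r1.K.V, r1.K.l k = none ∧ g.fV (r1.incL.fV k) = x.1 := ⟨(), rfl, hx.symm⟩
        show _ = if hk : ∃ k : r1.K.V, r1.K.l k = none ∧ g.fV (r1.incL.fV k) = x.1 then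
          r1.R.l (r1.incR.fV hk.choose) else G.l x.1
        rw [dif_pos hex]
        rfl
      · rw [if_neg hx]
        have hnex : ¬ ∃ k : r1.K.V, r1.K.l k = none ∧ g.fV (r1.incL.fV k) = x.1 := by
          rintro ⟨k, -, hk2⟩
          exact hx hk2.symm
        show _ = if hk : ∃ k : r1.K.V, r1.K.l k = none ∧ g.fV (r1.incL.fV k) = x.1 then
          r1.R.l (r1.incR.fV hk.choose) else G.l x.1
        rw [dif_neg hnex]
    · exact (y.2 y.1 rfl).elim
  · rintro (x | y)
    · show (if x.1 = g.fV (0 : Fin 2) then some true else G.p x.1) = (r1.result G g h).p (Sum.inl x)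
      by_cases hx : x.1 = g.fV (0 : Fin 2)
      · rw [if_pos hx]
        have hex : ∃ k : r1.K.V, r1.K.p k = none ∧ g.fV (r1.incL.fV k) = x.1 := ⟨(), rfl, hx.symm⟩
        show _ = if hk : ∃ k : r1.K.V, r1.K.p k = none ∧ g.fV (r1.incL.fV k) = x.1 then
          r1.R.p (r1.incR.fV hk.choose) else G.p x.1
        rw [dif_pos hex]
        rfl
      · rw [if_neg hx]
        have hnex : ¬ ∃ k : r1.K.V, r1.K.p k = none ∧ g.fV (r1.incL.fV k) = x.1 := by
          rintro ⟨k, -, hk2⟩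
          exact hx hk2.symm
        show _ = if hk : ∃ k : r1.K.V, r1.K.p k = none ∧ g.fV (r1.incL.fV k) = x.1 then
          r1.R.p (r1.incR.fV hk.choose) else G.p x.1
        rw [dif_neg hnex]
    · exact (y.2 y.1 rfl).elim



/-! ### facts about matches of `r2` -/

theorem r2_delV {g : Morphism r2.L G} (x : G.V) : x ∉ r2.DelV G g := by
  rintro ⟨w, hw, -⟩
  exact hw w rfl

theorem r2_delE {g : Morphism r2.L G} (x : G.E) :
    x ∈ r2.DelE G g ↔ x = g.fE () := by
  constructor
  · rintro ⟨e', -, rfl⟩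
    rfl
  · rintro rfl
    exact ⟨(), fun k => k.elim, rfl⟩

noncomputable def r2_result_iso (g : Morphism r2.L G) (h : r2.Applicable G g) :
    Iso (r2.result G g h) (reroot G (g.fV (0 : Fin 2)) (g.fV (1 : Fin 2))) := by
  have hchoose : ∀ (hex : ∃ k : r2.K.V, r2.K.l k = none ∧ g.fV (r2.incL.fV k) = g.fV (0 : Fin 2)),
      True := fun _ => trivial
  refine Iso.ofStrict
    (⟨Sum.elim (fun x => x.1) (fun y => (y.2 y.1 rfl).elim),
      fun x => Sum.inl ⟨x, fun hd => r2_delV (g := g) x hd⟩, ?_, ?_⟩)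
    (⟨Sum.elim (fun x => x.1) (fun _ => g.fE ()),
      fun x => if hx : x = g.fE () then Sum.inr ⟨(), fun k => k.elim⟩ else
        Sum.inl ⟨x, fun hd => hx ((r2_delE (g := g) x).mp hd)⟩, ?_, ?_⟩) ?_ ?_ ?_ ?_ ?_
  · rintro (x | y)
    · rfl
    · exact (y.2 y.1 rfl).elim
  · intro x; rfl
  · rintro (x | y)
    · show (if hx : x.1 = g.fE () then _ else _) = _
      erw [dif_neg (fun hc => x.2 ((r2_delE (g := g) x.1).mpr hc))]
      rfl
    · show (if hx : g.fE () = g.fE () then _ else _) = _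
      erw [dif_pos rfl]
      rfl
  · intro x
    by_cases hx : x = g.fE ()
    · show Sum.elim _ _ (if _ : x = g.fE () then _ else _) = x
      rw [dif_pos hx]
      exact hx.symm
    · show Sum.elim _ _ (if _ : x = g.fE () then _ else _) = x
      rw [dif_neg hx]
      rfl
  · -- sources
    rintro (x | y)
    · rfl
    · have hex : ∃ k : r2.K.V, r2.incR.fV k = r2.R.s y.1 := ⟨(0 : Fin 2), rfl⟩
      have hres : (r2.result G g h).s (Sum.inr y) =
          Sum.inl ⟨g.fV (r2.incL.fV hex.choose), r2.kept_incL G h.1 hex.choose⟩ := dif_pos hex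
      rw [hres]
      show G.s (g.fE ()) = g.fV (r2.incL.fV hex.choose)
      have hc0 : hex.choose = (0 : Fin 2) := hex.choose_spec
      rw [hc0]
      exact (g.src ()).symm
  · -- targets
    rintro (x | y)
    · rfl
    · have hex : ∃ k : r2.K.V, r2.incR.fV k = r2.R.t y.1 := ⟨(1 : Fin 2), rfl⟩
      have hres : (r2.result G g h).t (Sum.inr y) =
          Sum.inl ⟨g.fV (r2.incL.fV hex.choose), r2.kept_incL G h.1 hex.choose⟩ := dif_pos hex
      rw [hres]
      show G.t (g.fE ()) = g.fV (r2.incL.fV hex.choose)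
      have hc1 : hex.choose = (1 : Fin 2) := hex.choose_spec
      rw [hc1]
      exact (g.tgt ()).symm
  · rintro (x | y) <;> rfl
  · -- node labels
    rintro (x | y)
    · show (if x.1 = g.fV (0 : Fin 2) then some NodeLab.tri else
        if x.1 = g.fV (1 : Fin 2) then some NodeLab.square else G.l x.1) =
        (if hk : ∃ k : r2.K.V, r2.K.l k = none ∧ g.fV (r2.incL.fV k) = x.1 then
          r2.R.l (r2.incR.fV hk.choose) else G.l x.1)
      by_cases h0 : x.1 = g.fV (0 : Fin 2)
      · have hex : ∃ k : r2.K.V, r2.K.l k = none ∧ g.fV (r2.incL.fV k) = x.1 :=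
          ⟨(0 : Fin 2), rfl, h0.symm⟩
        rw [if_pos h0, dif_pos hex]
        have : hex.choose = (0 : Fin 2) := h.1.1 (hex.choose_spec.2.trans h0)
        rw [this]
        rfl
      · by_cases h1 : x.1 = g.fV (1 : Fin 2)
        · have hex : ∃ k : r2.K.V, r2.K.l k = none ∧ g.fV (r2.incL.fV k) = x.1 :=
            ⟨(1 : Fin 2), rfl, h1.symm⟩
          rw [if_neg h0, if_pos h1, dif_pos hex]
          have : hex.choose = (1 : Fin 2) := h.1.1 (hex.choose_spec.2.trans h1)
          rw [this]
          rfl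
        · have hnex : ¬ ∃ k : r2.K.V, r2.K.l k = none ∧ g.fV (r2.incL.fV k) = x.1 := by
            rintro ⟨k, -, hk2⟩
            match k with
            | (0 : Fin 2) => exact h0 hk2.symm
            | (1 : Fin 2) => exact h1 hk2.symm
          rw [if_neg h0, if_neg h1, dif_neg hnex]
    · exact (y.2 y.1 rfl).elim
  · -- rootedness
    rintro (x | y)
    · show (if x.1 = g.fV (0 : Fin 2) then some false else
        if x.1 = g.fV (1 : Fin 2) then some true else G.p x.1) =
        (if hk : ∃ k : r2.K.V, r2.K.p k = none ∧ g.fV (r2.incL.fV k) = x.1 then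
          r2.R.p (r2.incR.fV hk.choose) else G.p x.1)
      by_cases h0 : x.1 = g.fV (0 : Fin 2)
      · have hex : ∃ k : r2.K.V, r2.K.p k = none ∧ g.fV (r2.incL.fV k) = x.1 :=
          ⟨(0 : Fin 2), rfl, h0.symm⟩
        rw [if_pos h0, dif_pos hex]
        have : hex.choose = (0 : Fin 2) := h.1.1 (hex.choose_spec.2.trans h0)
        rw [this]
        rfl
      · by_cases h1 : x.1 = g.fV (1 : Fin 2)
        · have hex : ∃ k : r2.K.V, r2.K.p k = none ∧ g.fV (r2.incL.fV k) = x.1 :=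
            ⟨(1 : Fin 2), rfl, h1.symm⟩
          rw [if_neg h0, if_pos h1, dif_pos hex]
          have : hex.choose = (1 : Fin 2) := h.1.1 (hex.choose_spec.2.trans h1)
          rw [this]
          rfl
        · have hnex : ¬ ∃ k : r2.K.V, r2.K.p k = none ∧ g.fV (r2.incL.fV k) = x.1 := by
            rintro ⟨k, -, hk2⟩
            match k with
            | (0 : Fin 2) => exact h0 hk2.symm
            | (1 : Fin 2) => exact h1 hk2.symm
          rw [if_neg h0, if_neg h1, dif_neg hnex]
    · exact (y.2 y.1 rfl).elim

end Batch5


section Batch6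

theorem fin2_ne01 : (0 : Fin 2) ≠ 1 := by decide
theorem fin2_ne10 : (1 : Fin 2) ≠ 0 := by decide

attribute [local instance] Classical.propDecidable

variable {G H : RGraph NodeLab Unit}

theorem step_master (hst : GTStep TreeRules G H) :
    (TRInv G → TRInv H) ∧ (IsTree G ↔ IsTree H) ∧ mu H < mu G := by
  obtain ⟨r, hr, g, hap, ⟨φ⟩⟩ := hst
  simp only [TreeRules, Set.mem_insert_iff, Set.mem_singleton_iff] at hr
  rcases hr with rfl | rfl | rfl
  · have hinc := r0_hinc hap
    have ψ : Iso (prune G (g.fV (0 : Fin 2)) (g.fV (1 : Fin 2)) (g.fE ()) hinc) H :=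
      ((r0_result_iso g hap hinc).symm.trans φ)
    have huv : g.fV (0 : Fin 2) ≠ g.fV (1 : Fin 2) := fun hc => absurd (hap.1.1 hc) fin2_ne01
    have hs : G.s (g.fE ()) = g.fV (0 : Fin 2) := (g.src ()).symm
    have ht : G.t (g.fE ()) = g.fV (1 : Fin 2) := (g.tgt ()).symm
    have hpv : G.p (g.fV (1 : Fin 2)) = some true := g.rootedness (1 : Fin 2) true rfl
    refine ⟨fun hI => ψ.trinv_of (prune_trinv huv hs ht hpv hinc hI),
      (prune_tree huv hs ht hinc).trans ψ.isTree_iff, ?_⟩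
    rw [← ψ.mu_eq]
    exact mu_prune_lt huv hinc
  · have hinc := r1_hinc hap
    have ψ : Iso (prune G (g.fV (0 : Fin 2)) (g.fV (1 : Fin 2)) (g.fE ()) hinc) H :=
      ((r1_result_iso g hap hinc).symm.trans φ)
    have huv : g.fV (0 : Fin 2) ≠ g.fV (1 : Fin 2) := fun hc => absurd (hap.1.1 hc) fin2_ne01
    have hs : G.s (g.fE ()) = g.fV (0 : Fin 2) := (g.src ()).symm
    have ht : G.t (g.fE ()) = g.fV (1 : Fin 2) := (g.tgt ()).symm
    have hpv : G.p (g.fV (1 : Fin 2)) = some true := g.rootedness (1 : Fin 2) true rfl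
    refine ⟨fun hI => ψ.trinv_of (prune_trinv huv hs ht hpv hinc hI),
      (prune_tree huv hs ht hinc).trans ψ.isTree_iff, ?_⟩
    rw [← ψ.mu_eq]
    exact mu_prune_lt huv hinc
  · have ψ : Iso (reroot G (g.fV (0 : Fin 2)) (g.fV (1 : Fin 2))) H :=
      ((r2_result_iso g hap).symm.trans φ)
    have huv : g.fV (0 : Fin 2) ≠ g.fV (1 : Fin 2) := fun hc => absurd (hap.1.1 hc) fin2_ne01
    have hs : G.s (g.fE ()) = g.fV (0 : Fin 2) := (g.src ()).symm
    have ht : G.t (g.fE ()) = g.fV (1 : Fin 2) := (g.tgt ()).symm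
    have hpu : G.p (g.fV (0 : Fin 2)) = some true := g.rootedness (0 : Fin 2) true rfl
    have hlu : G.l (g.fV (0 : Fin 2)) = some NodeLab.square := g.nodeLabel (0 : Fin 2) NodeLab.square rfl
    have hlv : G.l (g.fV (1 : Fin 2)) = some NodeLab.square := g.nodeLabel (1 : Fin 2) NodeLab.square rfl
    refine ⟨fun hI => ψ.trinv_of (reroot_trinv huv hs ht hpu hI),
      reroot_tree.symm.trans ψ.isTree_iff, ?_⟩
    rw [← ψ.mu_eq]
    have := mu_reroot_lt huv hlu hlv
    omega

theorem star_master (h : Relation.ReflTransGen (GTStep TreeRules) G H) :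
    (TRInv G → TRInv H) ∧ (IsTree G ↔ IsTree H) := by
  induction h with
  | refl => exact ⟨id, Iff.rfl⟩
  | tail _ hstep ih =>
    exact ⟨fun hI => (step_master hstep).1 (ih.1 hI), ih.2.trans (step_master hstep).2.1⟩

theorem can_step (hG : ¬ InNormalForm TreeRules G) :
    ∃ H, GTStep TreeRules G H ∧ mu H < mu G := by
  obtain ⟨r, hr, g, hap⟩ := not_not.mp hG
  have hstep : GTStep TreeRules G (r.result G g hap) := ⟨r, hr, g, hap, ⟨Iso.refl _⟩⟩
  exact ⟨r.result G g hap, hstep, (step_master hstep).2.2⟩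

theorem exists_nf : ∀ (n : ℕ) (G : RGraph NodeLab Unit), mu G ≤ n →
    ∃ H, Relation.ReflTransGen (GTStep TreeRules) G H ∧ InNormalForm TreeRules H := by
  intro n
  induction n with
  | zero =>
    intro G hle
    by_cases h : InNormalForm TreeRules G
    · exact ⟨G, Relation.ReflTransGen.refl, h⟩
    · obtain ⟨H, _, hlt⟩ := can_step h
      omega
  | succ n ih =>
    intro G hle
    by_cases h : InNormalForm TreeRules G
    · exact ⟨G, Relation.ReflTransGen.refl, h⟩
    · obtain ⟨H, hstep, hlt⟩ := can_step h
      obtain ⟨H', hstar, hnf⟩ := ih H (by omega)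
      exact ⟨H', Relation.ReflTransGen.head hstep hstar, hnf⟩

theorem single_tree : IsTree singleRootGraph := by
  refine ⟨⟨()⟩, fun v w => ⟨[], rfl⟩, ?_, ?_⟩
  · rintro ⟨v, l, hne, hw, -⟩
    match l with
    | [] => exact hne rfl
    | (e, b) :: _ => exact e.elim
  · intro v
    have : IsEmpty {e : singleRootGraph.E // singleRootGraph.t e = v} := ⟨fun e => e.1.elim⟩
    simp [Nat.card_of_isEmpty]

theorem input_trinv (hG : IsInputGraph G) : TRInv G := by
  obtain ⟨⟨hl, hp⟩, hsq, hcount⟩ := hG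
  have h1 := Nat.card_eq_one_iff_unique.mp hcount
  obtain ⟨hsub, ⟨⟨rt, hrt⟩⟩⟩ := h1
  refine ⟨hl, hp, ⟨rt, hrt, ?_⟩, fun x _ => hsq x, ?_⟩
  · intro y hy
    exact congrArg Subtype.val (hsub.elim ⟨y, hy⟩ ⟨rt, hrt⟩)
  · intro x hx
    rw [hsq x] at hx
    exact absurd hx (by simp)

def pairFun {α : Type} (a b : α) : Fin 2 → α := fun i => Fin.cases a (fun _ => b) i

theorem nf_single (H : RGraph NodeLab Unit) (hI : TRInv H) (hT : IsTree H)
    (hnf : InNormalForm TreeRules H) : Nonempty (Iso H singleRootGraph) := by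
  obtain ⟨h1, h2, ⟨r, hr, hun⟩, h4, h5⟩ := hI
  obtain ⟨hne, hconn, hcyc, hdeg⟩ := hT
  have hlr : H.l r = some NodeLab.square := h4 r hr
  have hps : ∀ x, x ≠ r → H.p x = some false := by
    intro x hx
    obtain ⟨b, hb⟩ := Option.isSome_iff_exists.mp (h2 x)
    cases b
    · exact hb
    · exact absurd (hun x hb) hx
  have hno_out : ∀ e, H.s e ≠ r := by
    intro e hse
    have hcr : H.t e ≠ r := by
      intro hc
      exact hcyc ⟨r, [(e, true)], by simp, ⟨hse, hc⟩, by simp⟩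
    obtain ⟨lab, hlab⟩ := Option.isSome_iff_exists.mp (h1 (H.t e))
    cases lab
    · -- square child : r2 applies
      refine hnf ⟨r2, by simp [TreeRules], ?_⟩
      refine ⟨⟨pairFun r (H.t e), fun _ => e,
        fun _ => hse.symm, fun _ => rfl, fun _ => rfl, ?_, ?_⟩, ⟨?_, ?_⟩, ?_⟩
      · intro w x hx
        have hx' : (some NodeLab.square : Option NodeLab) = some x := hx
        obtain rfl : NodeLab.square = x := Option.some.inj hx'
        by_cases hw : w = (0 : Fin 2)
        · rw [hw]; exact hlr
        · rw [fin_two_eq_one hw]; exact hlab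
      · intro w b hb
        by_cases hw : w = (0 : Fin 2)
        · rw [hw] at hb ⊢
          have hb' : (some true : Option Bool) = some b := hb
          obtain rfl : true = b := Option.some.inj hb'
          exact hr
        · rw [fin_two_eq_one hw] at hb ⊢
          have hb' : (some false : Option Bool) = some b := hb
          obtain rfl : false = b := Option.some.inj hb'
          exact hps _ hcr
      · intro a b hab
        by_cases ha : a = (0 : Fin 2) <;> by_cases hb : b = (0 : Fin 2)
        · rw [ha, hb]
        · rw [ha, fin_two_eq_one hb]
          rw [ha, fin_two_eq_one hb] at hab
          exact absurd hab.symm hcr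
        · rw [fin_two_eq_one ha, hb]
          rw [fin_two_eq_one ha, hb] at hab
          exact absurd hab hcr
        · rw [fin_two_eq_one ha, fin_two_eq_one hb]
      · exact fun a b _ => Subsingleton.elim (α := Unit) a b
      · intro e' _ w hw
        exact absurd rfl (hw w)
    · -- triangle child : closed directed walk
      obtain ⟨c, w, hcne, hw, hpw⟩ := h5 (H.t e) hlab
      have hwr : w = r := hun w hpw
      rw [hwr] at hw
      have : (e :: c) = [] := no_closed_dirwalk hcyc ⟨hse, hw⟩
      simp at this
  have hno_in : ∀ e, H.t e ≠ r := by
    intro e hte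
    have hur : H.s e ≠ r := hno_out e
    have hpu' : H.p (H.s e) = some false := hps _ hur
    have huniq : ∀ e', H.t e' = r → e' = e := by
      intro e' he'
      by_contra hne'
      have hnt : Nontrivial {e'' : H.E // H.t e'' = r} :=
        ⟨⟨e', he'⟩, ⟨e, hte⟩, fun hc => hne' (congrArg Subtype.val hc)⟩
      have := Finite.one_lt_card_iff_nontrivial.mpr hnt
      have := hdeg r
      omega
    have hinc : ∀ e', e' ≠ e → H.s e' ≠ r ∧ H.t e' ≠ r :=
      fun e' hne' => ⟨hno_out e', fun hc => hne' (huniq e' hc)⟩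
    obtain ⟨lab, hlab⟩ := Option.isSome_iff_exists.mp (h1 (H.s e))
    cases lab
    · -- square parent : r0 applies
      refine hnf ⟨r0, by simp [TreeRules], ?_⟩
      refine ⟨⟨pairFun (H.s e) r, fun _ => e,
        fun _ => rfl, fun _ => hte.symm, fun _ => rfl, ?_, ?_⟩, ⟨?_, ?_⟩, ?_⟩
      · intro w x hx
        have hx' : (some NodeLab.square : Option NodeLab) = some x := hx
        obtain rfl : NodeLab.square = x := Option.some.inj hx'
        by_cases hw : w = (0 : Fin 2)
        · rw [hw]; exact hlab
        · rw [fin_two_eq_one hw]; exact hlr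
      · intro w b hb
        by_cases hw : w = (0 : Fin 2)
        · rw [hw] at hb ⊢
          have hb' : (some false : Option Bool) = some b := hb
          obtain rfl : false = b := Option.some.inj hb'
          exact hpu'
        · rw [fin_two_eq_one hw] at hb ⊢
          have hb' : (some true : Option Bool) = some b := hb
          obtain rfl : true = b := Option.some.inj hb'
          exact hr
      · intro a b hab
        by_cases ha : a = (0 : Fin 2) <;> by_cases hb : b = (0 : Fin 2)
        · rw [ha, hb]
        · rw [ha, fin_two_eq_one hb]
          rw [ha, fin_two_eq_one hb] at hab
          exact absurd hab hur
        · rw [fin_two_eq_one ha, hb]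
          rw [fin_two_eq_one ha, hb] at hab
          exact absurd hab.symm hur
        · rw [fin_two_eq_one ha, fin_two_eq_one hb]
      · exact fun a b _ => Subsingleton.elim (α := Unit) a b
      · intro e₀ he₀ w hw
        have hw1 := fin_two_eq_one (Ne.symm (hw ()))
        subst hw1
        have he₀' : e₀ ≠ e := fun hc => he₀ () hc.symm
        exact hinc e₀ he₀'
    · -- triangle parent : r1 applies
      refine hnf ⟨r1, by simp [TreeRules], ?_⟩
      refine ⟨⟨pairFun (H.s e) r, fun _ => e,
        fun _ => rfl, fun _ => hte.symm, fun _ => rfl, ?_, ?_⟩, ⟨?_, ?_⟩, ?_⟩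
      · intro w x hx
        by_cases hw : w = (0 : Fin 2)
        · rw [hw] at hx ⊢
          have hx' : (some NodeLab.tri : Option NodeLab) = some x := hx
          obtain rfl : NodeLab.tri = x := Option.some.inj hx'
          exact hlab
        · rw [fin_two_eq_one hw] at hx ⊢
          have hx' : (some NodeLab.square : Option NodeLab) = some x := hx
          obtain rfl : NodeLab.square = x := Option.some.inj hx'
          exact hlr
      · intro w b hb
        by_cases hw : w = (0 : Fin 2)
        · rw [hw] at hb ⊢
          have hb' : (some false : Option Bool) = some b := hb
          obtain rfl : false = b := Option.some.inj hb'
          exact hpu'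
        · rw [fin_two_eq_one hw] at hb ⊢
          have hb' : (some true : Option Bool) = some b := hb
          obtain rfl : true = b := Option.some.inj hb'
          exact hr
      · intro a b hab
        by_cases ha : a = (0 : Fin 2) <;> by_cases hb : b = (0 : Fin 2)
        · rw [ha, hb]
        · rw [ha, fin_two_eq_one hb]
          rw [ha, fin_two_eq_one hb] at hab
          exact absurd hab hur
        · rw [fin_two_eq_one ha, hb]
          rw [fin_two_eq_one ha, hb] at hab
          exact absurd hab.symm hur
        · rw [fin_two_eq_one ha, fin_two_eq_one hb]
      · exact fun a b _ => Subsingleton.elim (α := Unit) a b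
      · intro e₀ he₀ w hw
        have hw1 := fin_two_eq_one (Ne.symm (hw ()))
        subst hw1
        have he₀' : e₀ ≠ e := fun hc => he₀ () hc.symm
        exact hinc e₀ he₀'
  have hall : ∀ x : H.V, x = r := by
    intro x
    obtain ⟨l, hl⟩ := hconn r x
    match l, hl with
    | [], hl => exact hl.symm
    | (e', true) :: rest, hl => exact absurd hl.1 (hno_out e')
    | (e', false) :: rest, hl => exact absurd hl.1 (hno_in e')
  have hE : IsEmpty H.E := ⟨fun e => hno_out e (hall (H.s e))⟩
  refine ⟨Iso.ofStrict
    ⟨fun _ => (), fun _ => r, fun x => (hall x).symm, fun _ => rfl⟩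
    ⟨fun e => (hE.false e).elim, fun e => e.elim, fun e => (hE.false e).elim, fun e => e.elim⟩
    (fun e => (hE.false e).elim) (fun e => (hE.false e).elim) (fun e => (hE.false e).elim)
    ?_ ?_⟩
  · intro x
    show some NodeLab.square = H.l x
    rw [hall x, hlr]
  · intro x
    show some true = H.p x
    rw [hall x, hr]

end Batch6

/-- **Tree Recognition**: every input graph `G` has a normal form, and any
normal form `H` of `G` is isomorphic to the single rooted `□`-labelled node
iff `G` is a tree. -/
theorem tree_recognition (G : RGraph NodeLab Unit) (hG : IsInputGraph G) :
    (∃ H, GTDerivStar TreeRules G H ∧ InNormalForm TreeRules H) ∧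
    (∀ H, GTDerivStar TreeRules G H → InNormalForm TreeRules H →
      (Nonempty (Iso H singleRootGraph) ↔ IsTree G)) := by
  have hI : TRInv G := input_trinv hG
  constructor
  · obtain ⟨H, hstar, hnf⟩ := exists_nf (mu G) G le_rfl
    exact ⟨H, Or.inl hstar, hnf⟩
  · intro H hder hnf
    have hmaster : (TRInv G → TRInv H) ∧ (IsTree G ↔ IsTree H) := by
      rcases hder with hstar | hiso
      · exact star_master hstar
      · obtain ⟨φ⟩ := hiso
        exact ⟨φ.trinv_of, φ.isTree_iff⟩
    constructor
    · rintro ⟨φ⟩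
      exact hmaster.2.mpr (φ.symm.isTree_of single_tree)
    · intro hT
      exact nf_single H (hmaster.1 hI) (hmaster.2.mp hT) hnf
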